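/- For the scalar map g(a) = φ(wλa) with φ odd, C³, φ'(0) = α > 0, φ'''(0) = γ < 0, λ > 0: if wλα > 1 and wλα − 1 is sufficiently small, then there exists a* > 0 with g(a*) = a*, and |g'(a*)| < 1, so ±a* are locally attracting fixed points, while a = 0 is a repelling fixed point (|g'(0)| = wλα > 1). -/

import Mathlib

open Set

/-- If `f` has derivative `f'` everywhere, `f' ≥ 0` on `[0,b]`, then `f 0 ≤ f b`. -/
lemma aux_mono {f f' : ℝ → ℝ} (hf : ∀ t, HasDerivAt f (f' t) t)
    {b : ℝ} (hb : 0 ≤ b) (hpos : ∀ t ∈ Set.Icc (0:ℝ) b, 0 ≤ f' t) :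
    f 0 ≤ f b := by
  have hmono := monotoneOn_of_deriv_nonneg (convex_Icc (0:ℝ) b)
    (fun t _ => (hf t).continuousAt.continuousWithinAt)
    (fun t ht => (hf t).differentiableAt.differentiableWithinAt)
    (fun t ht => by
      rw [(hf t).deriv]; exact hpos t (interior_subset ht))
  exact hmono (Set.left_mem_Icc.2 hb) (Set.right_mem_Icc.2 hb) hb

set_option maxHeartbeats 4000000 in
/-- For the reduced scalar map `g(a) = φ(wλa)` with `φ` odd, `C³`,
`φ'(0) = α > 0`, `φ'''(0) = γ < 0` and `λ > 0`: whenever `wλα > 1` with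
`wλα − 1` sufficiently small, there is a fixed point `a* > 0` with
`|g'(±a*)| < 1` (so `±a*` are locally attracting), while `0` is repelling
since `|g'(0)| = wλα > 1`. -/
theorem stmt_9 (φ : ℝ → ℝ) (hodd : ∀ z, φ (-z) = -φ z)
    (hC3 : ContDiff ℝ 3 φ) (α γ : ℝ)
    (hα : deriv φ 0 = α) (hαpos : 0 < α)
    (hγ : iteratedDeriv 3 φ 0 = γ) (hγneg : γ < 0)
    (lam : ℝ) (hlam : 0 < lam) :
    ∃ δ > (0 : ℝ), ∀ w : ℝ, 0 < w → 1 < w * lam * α → w * lam * α - 1 < δ →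
      ∃ aStar > (0 : ℝ),
        φ (w * lam * aStar) = aStar ∧
        φ (w * lam * (-aStar)) = -aStar ∧
        |deriv (fun a => φ (w * lam * a)) aStar| < 1 ∧
        |deriv (fun a => φ (w * lam * a)) (-aStar)| < 1 ∧
        1 < |deriv (fun a => φ (w * lam * a)) 0| := by
  have hφdiff : Differentiable ℝ φ := hC3.differentiable (by norm_num)
  set ψ := deriv φ with hψdef
  have hψdiff : Differentiable ℝ ψ := by
    have h := hC3.differentiable_iteratedDeriv 1 (by norm_num)
    rwa [iteratedDeriv_one] at h
  set ψd := iteratedDeriv 2 φ with hψd_def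
  have hψd_eq : deriv ψ = ψd := by
    rw [hψd_def, show (2:ℕ) = 1+1 from rfl, iteratedDeriv_succ, iteratedDeriv_one]
  have hψd_diff : Differentiable ℝ ψd := hC3.differentiable_iteratedDeriv 2 (by norm_num)
  set ψdd := iteratedDeriv 3 φ with hψdd_def
  have hψdd_eq : deriv ψd = ψdd := by
    rw [hψd_def, hψdd_def]
    exact (iteratedDeriv_succ (n := 2)).symm
  have hψdd_cont : Continuous ψdd := hC3.continuous_iteratedDeriv 3 (by norm_num)
  have hφ0 : φ 0 = 0 := by have h := hodd 0; simp only [neg_zero] at h; linarith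
  have hψeven : ∀ x, ψ (-x) = ψ x := by
    intro x
    have h1 : (fun y => φ (-y)) = fun y => -φ y := funext hodd
    have h2 : deriv (fun y => φ (-y)) x = -ψ (-x) := deriv_comp_neg φ x
    rw [h1, deriv.fun_neg] at h2
    have := neg_injective h2.symm
    linarith [this]
  have hψdodd : ∀ x, ψd (-x) = -ψd x := by
    intro x
    have h1 : (fun y => ψ (-y)) = ψ := funext hψeven
    have h2 : deriv (fun y => ψ (-y)) x = -deriv ψ (-x) := deriv_comp_neg ψ x
    rw [h1, hψd_eq] at h2
    linarith [h2]
  have hψd0 : ψd 0 = 0 := by have h := hψdodd 0; rw [neg_zero] at h; linarith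
  have hψ0 : ψ 0 = α := hα
  have hψdd0 : ψdd 0 = γ := hγ
  set B := -γ with hBdef
  have hB : 0 < B := by rw [hBdef]; linarith
  have hγB : γ = -B := by rw [hBdef]; ring
  clear_value ψ ψd ψdd B
  -- choose r where the third derivative is within B/3 of γ
  obtain ⟨r, hr, hrb⟩ : ∃ r > (0:ℝ), ∀ s, |s| ≤ r → |ψdd s - γ| ≤ B/3 := by
    obtain ⟨ε, hε, hεb⟩ := Metric.continuousAt_iff.mp hψdd_cont.continuousAt (B/3) (by positivity)
    refine ⟨ε/2, by positivity, fun s hs => ?_⟩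
    have h := hεb (show dist s 0 < ε by rw [Real.dist_eq, sub_zero]; linarith)
    rw [Real.dist_eq, hψdd0] at h
    exact h.le
  -- second derivative bounds on [0,r]
  have S1u : ∀ t ∈ Set.Icc (0:ℝ) r, ψd t ≤ -(2*B/3) * t := by
    intro t ht
    have key := aux_mono (f := fun t => -(2*B/3)*t - ψd t) (f' := fun t => -(2*B/3) - ψdd t)
      (fun u => by
        have h1 : HasDerivAt (fun t : ℝ => -(2*B/3)*t) (-(2*B/3)) u := by
          simpa using (hasDerivAt_id u).const_mul (-(2*B/3))
        have h2 : HasDerivAt ψd (ψdd u) u := by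
          rw [← hψdd_eq]; exact (hψd_diff u).hasDerivAt
        exact h1.sub h2) ht.1
      (fun u hu => by
        have h := hrb u (by rw [abs_of_nonneg hu.1]; exact le_trans hu.2 ht.2)
        have h' := (abs_le.mp h).2
        rw [hγB] at h'
        linarith)
    simp only [mul_zero, hψd0, sub_zero] at key
    linarith
  have S1l : ∀ t ∈ Set.Icc (0:ℝ) r, -(4*B/3) * t ≤ ψd t := by
    intro t ht
    have key := aux_mono (f := fun t => ψd t - (-(4*B/3))*t) (f' := fun t => ψdd t - (-(4*B/3)))
      (fun u => by
        have h1 : HasDerivAt (fun t : ℝ => (-(4*B/3))*t) (-(4*B/3)) u := by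
          simpa using (hasDerivAt_id u).const_mul (-(4*B/3))
        have h2 : HasDerivAt ψd (ψdd u) u := by
          rw [← hψdd_eq]; exact (hψd_diff u).hasDerivAt
        exact h2.sub h1) ht.1
      (fun u hu => by
        have h := hrb u (by rw [abs_of_nonneg hu.1]; exact le_trans hu.2 ht.2)
        have h' := (abs_le.mp h).1
        rw [hγB] at h'
        linarith)
    simp only [mul_zero, hψd0, sub_zero, zero_sub, neg_neg] at key
    linarith
  -- first derivative bounds on [0,r]
  have S2u : ∀ x ∈ Set.Icc (0:ℝ) r, ψ x ≤ α - B/3 * x^2 := by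
    intro x hx
    have key := aux_mono (f := fun x => (α - B/3 * x^2) - ψ x)
      (f' := fun x => -(2*B/3)*x - ψd x)
      (fun u => by
        have h1 : HasDerivAt (fun x : ℝ => α - B/3 * x^2) (-(2*B/3)*u) u := by
          have h := ((hasDerivAt_pow 2 u).const_mul (B/3)).const_sub α
          refine h.congr_deriv ?_
          push_cast; ring
        have h2 : HasDerivAt ψ (ψd u) u := by
          rw [← hψd_eq]; exact (hψdiff u).hasDerivAt
        exact h1.sub h2) hx.1
      (fun u hu => by
        have h := S1u u ⟨hu.1, le_trans hu.2 hx.2⟩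
        linarith)
    simp only [mul_zero, hψ0, zero_pow, ne_eq, OfNat.ofNat_ne_zero, not_false_eq_true,
      sub_zero] at key
    linarith [key]
  have S2l : ∀ x ∈ Set.Icc (0:ℝ) r, α - 2*B/3 * x^2 ≤ ψ x := by
    intro x hx
    have key := aux_mono (f := fun x => ψ x - (α - 2*B/3 * x^2))
      (f' := fun x => ψd x - (-(4*B/3))*x)
      (fun u => by
        have h1 : HasDerivAt (fun x : ℝ => α - 2*B/3 * x^2) ((-(4*B/3))*u) u := by
          have h := ((hasDerivAt_pow 2 u).const_mul (2*B/3)).const_sub α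
          refine h.congr_deriv ?_
          push_cast; ring
        have h2 : HasDerivAt ψ (ψd u) u := by
          rw [← hψd_eq]; exact (hψdiff u).hasDerivAt
        exact h2.sub h1) hx.1
      (fun u hu => by
        have h := S1l u ⟨hu.1, le_trans hu.2 hx.2⟩
        linarith)
    simp only [mul_zero, hψ0, zero_pow, ne_eq, OfNat.ofNat_ne_zero, not_false_eq_true,
      sub_zero] at key
    linarith [key]
  -- choose δ
  refine ⟨min (r^2*B/(18*α)) (1/5), lt_min (by positivity) (by norm_num), ?_⟩
  intro w hw hgt hlt
  set c := w * lam with hcdef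
  have hc : 0 < c := mul_pos hw hlam
  clear_value c
  obtain ⟨d, hd1, hdpos, hdlt1, hdlt2⟩ :
      ∃ d : ℝ, c*α = 1 + d ∧ 0 < d ∧ d < r^2*B/(18*α) ∧ d < 1/5 := by
    refine ⟨c*α - 1, by ring, by linarith, ?_, ?_⟩
    · exact lt_of_lt_of_le hlt (min_le_left _ _)
    · exact lt_of_lt_of_le hlt (min_le_right _ _)
  obtain ⟨s, hsB, hspos⟩ : ∃ s : ℝ, s * (B*c^3) = d ∧ 0 < s := by
    refine ⟨d/(B*c^3), div_mul_cancel₀ _ (by positivity), by positivity⟩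
  set aLo := Real.sqrt (9/4*s) with haLodef
  set aHi := Real.sqrt (18*s) with haHidef
  have haLo : 0 < aLo := Real.sqrt_pos.mpr (by positivity)
  have haHi : 0 < aHi := Real.sqrt_pos.mpr (by positivity)
  have haLoSq : aLo^2 = 9/4*s := Real.sq_sqrt (by positivity)
  have haHiSq : aHi^2 = 18*s := Real.sq_sqrt (by positivity)
  have hlohi : aLo ≤ aHi := Real.sqrt_le_sqrt (by linarith)
  clear_value aLo aHi
  have hcinv : 1/α < c := by
    rw [div_lt_iff₀ hαpos]; linarith
  have hcaHi : c * aHi ≤ r := by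
    have e : (c*aHi)^2 * (B*c) = 18*d := by
      rw [mul_pow, haHiSq]
      linear_combination 18 * hsB
    have h2 : (c*aHi)^2 = 18*d/(B*c) := by
      rw [eq_div_iff (by positivity : B*c ≠ 0)]
      exact e
    have h3 : d * (18*α) < r^2*B := by
      have h := mul_lt_mul_of_pos_right hdlt1 (show (0:ℝ) < 18*α by positivity)
      rwa [div_mul_cancel₀ _ (by positivity : (18:ℝ)*α ≠ 0)] at h
    have h1 : (c*aHi)^2 ≤ r^2 := by
      rw [h2, div_le_iff₀ (by positivity)]
      have hαc : 1 ≤ α * c := by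
        have h6 := (div_lt_iff₀ hαpos).mp hcinv
        linarith
      have h5 : 18*d ≤ d*(18*α)*c := by
        have h7 := mul_le_mul_of_nonneg_left hαc (show (0:ℝ) ≤ 18*d by positivity)
        linarith
      calc 18*d ≤ d*(18*α)*c := h5
        _ ≤ r^2*B*c := by
            have h8 := mul_le_mul_of_nonneg_right h3.le hc.le
            linarith
        _ = r^2*(B*c) := by ring
    have h4 := Real.sqrt_le_sqrt h1
    rwa [Real.sqrt_sq (by positivity), Real.sqrt_sq hr.le] at h4
  -- cubic bounds on [0, r/c]
  have hgder : ∀ u : ℝ, HasDerivAt (fun a => φ (c*a)) (ψ (c*u) * c) u := by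
    intro u
    have hin : HasDerivAt (fun a : ℝ => c*a) c u := by
      simpa using (hasDerivAt_id u).const_mul c
    have h := ((hφdiff (c*u)).hasDerivAt).comp u hin
    simpa [Function.comp_def, ← hψdef] using h
  have S3u : ∀ a : ℝ, 0 ≤ a → c*a ≤ r → φ (c*a) ≤ c*α*a - B/9*c^3*a^3 := by
    intro a ha hcar
    have key := aux_mono (f := fun a => (c*α*a - B/9*c^3*a^3) - φ (c*a))
      (f' := fun a => (c*α - B/3*c^3*a^2) - ψ (c*a) * c)
      (fun u => by
        have h1 : HasDerivAt (fun a : ℝ => c*α*a - B/9*c^3*a^3) (c*α - B/3*c^3*u^2) u := by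
          have hA : HasDerivAt (fun a : ℝ => c*α*a) (c*α) u := by
            simpa using (hasDerivAt_id u).const_mul (c*α)
          have hBB : HasDerivAt (fun a : ℝ => B/9*c^3*a^3) (B/3*c^3*u^2) u := by
            have h := (hasDerivAt_pow 3 u).const_mul (B/9*c^3)
            refine h.congr_deriv ?_
            push_cast; ring
          exact hA.sub hBB
        exact h1.sub (hgder u)) ha
      (fun u hu => by
        have hcu1 : (0:ℝ) ≤ c*u := mul_nonneg hc.le hu.1
        have hcu2 : c*u ≤ r := le_trans (mul_le_mul_of_nonneg_left hu.2 hc.le) hcar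
        have h := S2u (c*u) ⟨hcu1, hcu2⟩
        linarith [mul_le_mul_of_nonneg_right h hc.le])
    simp only [mul_zero, hφ0, sub_zero] at key
    linarith [key]
  have S3l : ∀ a : ℝ, 0 ≤ a → c*a ≤ r → c*α*a - 2*B/9*c^3*a^3 ≤ φ (c*a) := by
    intro a ha hcar
    have key := aux_mono (f := fun a => φ (c*a) - (c*α*a - 2*B/9*c^3*a^3))
      (f' := fun a => ψ (c*a) * c - (c*α - 2*B/3*c^3*a^2))
      (fun u => by
        have h1 : HasDerivAt (fun a : ℝ => c*α*a - 2*B/9*c^3*a^3) (c*α - 2*B/3*c^3*u^2) u := by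
          have hA : HasDerivAt (fun a : ℝ => c*α*a) (c*α) u := by
            simpa using (hasDerivAt_id u).const_mul (c*α)
          have hBB : HasDerivAt (fun a : ℝ => 2*B/9*c^3*a^3) (2*B/3*c^3*u^2) u := by
            have h := (hasDerivAt_pow 3 u).const_mul (2*B/9*c^3)
            refine h.congr_deriv ?_
            push_cast; ring
          exact hA.sub hBB
        exact (hgder u).sub h1) ha
      (fun u hu => by
        have hcu1 : (0:ℝ) ≤ c*u := mul_nonneg hc.le hu.1
        have hcu2 : c*u ≤ r := le_trans (mul_le_mul_of_nonneg_left hu.2 hc.le) hcar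
        have h := S2l (c*u) ⟨hcu1, hcu2⟩
        linarith [mul_le_mul_of_nonneg_right h hc.le])
    simp only [mul_zero, hφ0, sub_zero] at key
    linarith [key]
  -- sign change
  have hcaLo : c * aLo ≤ r := le_trans (mul_le_mul_of_nonneg_left hlohi hc.le) hcaHi
  have hgaLo : aLo < φ (c*aLo) := by
    have h := S3l aLo haLo.le hcaLo
    have e2 : 2*B/9*c^3*aLo^3 = (aLo/2) * d := by
      calc 2*B/9*c^3*aLo^3 = 2*B/9*c^3*(aLo*aLo^2) := by ring
        _ = 2*B/9*c^3*(aLo*(9/4*s)) := by rw [haLoSq]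
        _ = (aLo/2) * (s*(B*c^3)) := by ring
        _ = (aLo/2) * d := by rw [hsB]
    have e3 : c*α*aLo = (1+d)*aLo := by rw [hd1]
    linarith [h, e2, e3, mul_pos hdpos haLo]
  have hgaHi : φ (c*aHi) < aHi := by
    have h := S3u aHi haHi.le hcaHi
    have e2 : B/9*c^3*aHi^3 = (2*aHi) * d := by
      calc B/9*c^3*aHi^3 = B/9*c^3*(aHi*aHi^2) := by ring
        _ = B/9*c^3*(aHi*(18*s)) := by rw [haHiSq]
        _ = (2*aHi) * (s*(B*c^3)) := by ring
        _ = (2*aHi) * d := by rw [hsB]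
    have e3 : c*α*aHi = (1+d)*aHi := by rw [hd1]
    linarith [h, e2, e3, mul_pos hdpos haHi]
  have hcont : ContinuousOn (fun a => φ (c*a) - a) (Set.Icc aLo aHi) :=
    ((hφdiff.continuous.comp (continuous_const.mul continuous_id)).sub continuous_id).continuousOn
  have h0mem : (0:ℝ) ∈ Set.Icc ((fun a => φ (c*a) - a) aHi) ((fun a => φ (c*a) - a) aLo) := by
    constructor
    · simp only; linarith
    · simp only; linarith
  obtain ⟨aStar, haStarMem, haStarEq⟩ := intermediate_value_Icc' hlohi hcont h0mem
  have hfix : φ (c*aStar) = aStar := by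
    have h := haStarEq
    simp only at h
    linarith
  have haStarPos : 0 < aStar := lt_of_lt_of_le haLo haStarMem.1
  have hcaStar : c*aStar ≤ r := le_trans (mul_le_mul_of_nonneg_left haStarMem.2 hc.le) hcaHi
  -- quantitative bounds on aStar²
  have hub := S3u aStar haStarPos.le hcaStar
  have hlb := S3l aStar haStarPos.le hcaStar
  rw [hfix] at hub hlb
  have e3 : c*α*aStar = (1+d)*aStar := by rw [hd1]
  have hsqub : B*c^3*aStar^2 ≤ 9*d := by
    have h4 : B*c^3*aStar^2*aStar ≤ 9*d*aStar := by linarith [hub, e3]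
    exact le_of_mul_le_mul_right (by linarith [h4]) haStarPos
  have hsqlb : 9*d ≤ 2*(B*c^3*aStar^2) := by
    have h4 : 9*d*aStar ≤ 2*(B*c^3*aStar^2)*aStar := by linarith [hlb, e3]
    exact le_of_mul_le_mul_right (by linarith [h4]) haStarPos
  -- derivative bound at aStar
  have hψb_u := S2u (c*aStar) ⟨by positivity, hcaStar⟩
  have hψb_l := S2l (c*aStar) ⟨by positivity, hcaStar⟩
  have hderivBound : |ψ (c*aStar) * c| < 1 := by
    rw [abs_lt]
    constructor
    · have m1 := mul_le_mul_of_nonneg_right hψb_l hc.le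
      linarith [m1, hsqub, hd1, hdlt2]
    · have m2 := mul_le_mul_of_nonneg_right hψb_u hc.le
      linarith [m2, hsqlb, hd1, hdpos]
  refine ⟨aStar, haStarPos, hfix, ?_, ?_, ?_, ?_⟩
  · have e : c * -aStar = -(c*aStar) := by ring
    rw [e, hodd, hfix]
  · rw [(hgder aStar).deriv]
    exact hderivBound
  · rw [(hgder (-aStar)).deriv]
    rw [show c * -aStar = -(c*aStar) by ring, hψeven]
    exact hderivBound
  · rw [(hgder 0).deriv, mul_zero, hψ0, abs_of_pos (by positivity)]
    linarith [hd1, hdpos]
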